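/- As θ → 0, for fixed z and σ > 0, P_θ(σ) = σF_1(z/σ) + (σ²√θ/2)F_2(z/σ) + (σ³θ/6)F_3(z/σ) + o(θ), where F_1(x) = xΦ(x)+φ(x), F_2(x) = x²Φ(x)+xφ(x), F_3(x) = x³Φ(x) + (x² − 1/4)φ(x). -/

import Mathlib

open Real Set Filter Topology Asymptotics

noncomputable def stdNormalPdf (x : ℝ) : ℝ := (Real.sqrt (2 * π))⁻¹ * Real.exp (-x^2 / 2)
noncomputable def stdNormalCdf (x : ℝ) : ℝ := ∫ t in Iic x, stdNormalPdf t

/-- Normalized Black–Scholes put price with log-moneyness `√θ z` and volatility `σ`. -/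
noncomputable def bsPut (z θ σ : ℝ) : ℝ :=
  (1 / Real.sqrt θ) *
    (stdNormalCdf (z / σ + σ * Real.sqrt θ / 2) * Real.exp (Real.sqrt θ * z)
      - stdNormalCdf (z / σ - σ * Real.sqrt θ / 2))

noncomputable def F₁ (x : ℝ) : ℝ := x * stdNormalCdf x + stdNormalPdf x
noncomputable def F₂ (x : ℝ) : ℝ := x^2 * stdNormalCdf x + x * stdNormalPdf x
noncomputable def F₃ (x : ℝ) : ℝ := x^3 * stdNormalCdf x + (x^2 - 1/4) * stdNormalPdf x

section Aux
open MeasureTheory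

lemma pdf_cont : Continuous stdNormalPdf := by
  unfold stdNormalPdf; fun_prop

lemma pdf_integrable : Integrable stdNormalPdf := by
  have h : Integrable (fun x : ℝ => Real.exp (-(1/2 : ℝ) * x ^ 2)) :=
    integrable_exp_neg_mul_sq (by norm_num)
  have := h.const_mul (Real.sqrt (2 * π))⁻¹
  refine this.congr (Eventually.of_forall fun x => ?_)
  simp only [stdNormalPdf]; ring_nf

lemma cdf_hasDerivAt (x : ℝ) : HasDerivAt stdNormalCdf (stdNormalPdf x) x := by
  have key : ∀ u : ℝ, stdNormalCdf u = stdNormalCdf 0 + ∫ t in (0:ℝ)..u, stdNormalPdf t := by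
    intro u
    rw [← intervalIntegral.integral_Iic_sub_Iic pdf_integrable.integrableOn
      pdf_integrable.integrableOn]
    simp [stdNormalCdf]
  have h2 : HasDerivAt (fun u => stdNormalCdf 0 + ∫ t in (0:ℝ)..u, stdNormalPdf t)
      (stdNormalPdf x) x :=
    (intervalIntegral.integral_hasDerivAt_right (pdf_integrable.intervalIntegrable)
      (pdf_cont.stronglyMeasurableAtFilter _ _) pdf_cont.continuousAt).const_add _
  exact h2.congr_of_eventuallyEq (Eventually.of_forall fun u => (key u))

lemma cdf_cont : Continuous stdNormalCdf :=
  continuous_iff_continuousAt.2 fun x => (cdf_hasDerivAt x).continuousAt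

lemma pdf_hasDerivAt (t : ℝ) : HasDerivAt stdNormalPdf (-t * stdNormalPdf t) t := by
  have h : HasDerivAt (fun u : ℝ => -u^2/2) (-t) t := by
    have := ((hasDerivAt_pow 2 t).neg.div_const 2)
    exact this.congr_deriv (by push_cast; ring)
  have h2 := ((Real.hasDerivAt_exp (-t^2/2)).comp t h).const_mul (Real.sqrt (2*π))⁻¹
  have : HasDerivAt stdNormalPdf ((Real.sqrt (2*π))⁻¹ * (Real.exp (-t^2/2) * (-t))) t := h2
  convert this using 1
  simp only [stdNormalPdf]; ring

lemma key_identity (z σ : ℝ) (hσ : σ ≠ 0) (s : ℝ) :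
    stdNormalPdf (z/σ + σ*s/2) * Real.exp (s*z) = stdNormalPdf (z/σ - σ*s/2) := by
  simp only [stdNormalPdf]
  rw [mul_assoc, ← Real.exp_add]
  congr 1
  field_simp
  ring

variable (z σ : ℝ)

lemma haffA (s : ℝ) : HasDerivAt (fun s : ℝ => z/σ + σ*s/2) (σ/2) s := by
  simpa using (((hasDerivAt_id s).const_mul σ).div_const 2).const_add (z/σ)

lemma haffB (s : ℝ) : HasDerivAt (fun s : ℝ => z/σ - σ*s/2) (-(σ/2)) s := by
  simpa using (((hasDerivAt_id s).const_mul σ).div_const 2).const_sub (z/σ)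

lemma hCa (s : ℝ) : HasDerivAt (fun s : ℝ => stdNormalCdf (z/σ + σ*s/2))
    (stdNormalPdf (z/σ + σ*s/2) * (σ/2)) s :=
  (cdf_hasDerivAt _).comp s (haffA z σ s)

lemma hCb (s : ℝ) : HasDerivAt (fun s : ℝ => stdNormalCdf (z/σ - σ*s/2))
    (stdNormalPdf (z/σ - σ*s/2) * (-(σ/2))) s :=
  (cdf_hasDerivAt _).comp s (haffB z σ s)

lemma hpb (s : ℝ) : HasDerivAt (fun s : ℝ => stdNormalPdf (z/σ - σ*s/2))
    ((-(z/σ - σ*s/2) * stdNormalPdf (z/σ - σ*s/2)) * (-(σ/2))) s :=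
  (pdf_hasDerivAt _).comp s (haffB z σ s)

lemma hE (s : ℝ) : HasDerivAt (fun s : ℝ => Real.exp (s*z)) (Real.exp (s*z) * z) s := by
  simpa [Function.comp_def] using (Real.hasDerivAt_exp (s*z)).comp s ((hasDerivAt_id s).mul_const z)

lemma hG (hσ : σ ≠ 0) (s : ℝ) :
    HasDerivAt (fun s : ℝ => stdNormalCdf (z/σ + σ*s/2) * Real.exp (s*z) - stdNormalCdf (z/σ - σ*s/2))
      (σ * stdNormalPdf (z/σ - σ*s/2) + z * (stdNormalCdf (z/σ + σ*s/2) * Real.exp (s*z))) s := by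
  have h := ((hCa z σ s).mul (hE z s)).sub (hCb z σ s)
  have hv : σ * stdNormalPdf (z/σ - σ*s/2) + z * (stdNormalCdf (z/σ + σ*s/2) * Real.exp (s*z))
      = stdNormalPdf (z/σ + σ*s/2) * (σ/2) * Real.exp (s*z)
        + stdNormalCdf (z/σ + σ*s/2) * (Real.exp (s*z) * z)
        - stdNormalPdf (z/σ - σ*s/2) * (-(σ/2)) := by
    linear_combination (-(σ/2)) * key_identity z σ hσ s
  rw [hv]; exact h

lemma hG1 (hσ : σ ≠ 0) (s : ℝ) :
    HasDerivAt (fun s : ℝ => σ * stdNormalPdf (z/σ - σ*s/2) + z * (stdNormalCdf (z/σ + σ*s/2) * Real.exp (s*z)))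
      ((σ^2/2 * (z/σ - σ*s/2) + z*σ/2) * stdNormalPdf (z/σ - σ*s/2)
        + z^2 * (stdNormalCdf (z/σ + σ*s/2) * Real.exp (s*z))) s := by
  have h := ((hpb z σ s).const_mul σ).add (((hCa z σ s).mul (hE z s)).const_mul z)
  have hv : (σ^2/2 * (z/σ - σ*s/2) + z*σ/2) * stdNormalPdf (z/σ - σ*s/2)
        + z^2 * (stdNormalCdf (z/σ + σ*s/2) * Real.exp (s*z))
      = σ * ((-(z/σ - σ*s/2) * stdNormalPdf (z/σ - σ*s/2)) * (-(σ/2)))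
        + z * (stdNormalPdf (z/σ + σ*s/2) * (σ/2) * Real.exp (s*z)
              + stdNormalCdf (z/σ + σ*s/2) * (Real.exp (s*z) * z)) := by
    linear_combination (-(z*σ/2)) * key_identity z σ hσ s
  rw [hv]; exact h

lemma hG2 (hσ : σ ≠ 0) (s : ℝ) :
    HasDerivAt (fun s : ℝ => (σ^2/2 * (z/σ - σ*s/2) + z*σ/2) * stdNormalPdf (z/σ - σ*s/2)
        + z^2 * (stdNormalCdf (z/σ + σ*s/2) * Real.exp (s*z)))
      ((-(σ^3/4) * (1 - (z/σ - σ*s/2)^2) + z*σ^2/4 * (z/σ - σ*s/2) + z^2*σ/2) * stdNormalPdf (z/σ - σ*s/2)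
        + z^3 * (stdNormalCdf (z/σ + σ*s/2) * Real.exp (s*z))) s := by
  have h := ((((haffB z σ s).const_mul (σ^2/2)).add_const (z*σ/2)).mul (hpb z σ s)).add
    (((hCa z σ s).mul (hE z s)).const_mul (z^2))
  have hv : (-(σ^3/4) * (1 - (z/σ - σ*s/2)^2) + z*σ^2/4 * (z/σ - σ*s/2) + z^2*σ/2) * stdNormalPdf (z/σ - σ*s/2)
        + z^3 * (stdNormalCdf (z/σ + σ*s/2) * Real.exp (s*z))
      = σ^2/2 * -(σ/2) * stdNormalPdf (z/σ - σ*s/2)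
        + (σ^2/2 * (z/σ - σ*s/2) + z*σ/2) * ((-(z/σ - σ*s/2) * stdNormalPdf (z/σ - σ*s/2)) * (-(σ/2)))
        + z^2 * (stdNormalPdf (z/σ + σ*s/2) * (σ/2) * Real.exp (s*z)
              + stdNormalCdf (z/σ + σ*s/2) * (Real.exp (s*z) * z)) := by
    linear_combination (-(z^2*σ/2)) * key_identity z σ hσ s
  rw [hv]; exact h

lemma peano3 {f f1 f2 f3 : ℝ → ℝ} {c1 c2 c3 : ℝ}
    (h1 : ∀ s, HasDerivAt f (f1 s) s) (h2 : ∀ s, HasDerivAt f1 (f2 s) s)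
    (h3 : ∀ s, HasDerivAt f2 (f3 s) s) (hcont : ContinuousAt f3 0)
    (hf0 : f 0 = 0) (hc1 : f1 0 = c1) (hc2 : f2 0 = c2) (hc3 : f3 0 = c3) :
    (fun s => f s - (c1 * s + c2 * s^2/2 + c3 * s^3/6)) =o[𝓝[>] (0:ℝ)]
      (fun s => s^3) := by
  subst hc1 hc2 hc3
  have hH1 : ∀ s, HasDerivAt (fun s => f s - (f1 0 * s + f2 0 * s^2/2 + f3 0 * s^3/6))
      (f1 s - (f1 0 + f2 0 * s + f3 0 * s^2/2)) s := by
    intro s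
    have hp : HasDerivAt (fun s : ℝ => f1 0 * s + f2 0 * s^2/2 + f3 0 * s^3/6)
        (f1 0 + f2 0 * s + f3 0 * s^2/2) s := by
      have h := (((hasDerivAt_id s).const_mul (f1 0)).add
        (((hasDerivAt_pow 2 s).const_mul (f2 0)).div_const 2)).add
        (((hasDerivAt_pow 3 s).const_mul (f3 0)).div_const 6)
      exact h.congr_deriv (by push_cast; ring)
    exact (h1 s).sub hp
  have hH2 : ∀ s, HasDerivAt (fun s => f1 s - (f1 0 + f2 0 * s + f3 0 * s^2/2))
      (f2 s - (f2 0 + f3 0 * s)) s := by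
    intro s
    have hp : HasDerivAt (fun s : ℝ => f1 0 + f2 0 * s + f3 0 * s^2/2)
        (f2 0 + f3 0 * s) s := by
      have h := (((hasDerivAt_id s).const_mul (f2 0)).const_add (f1 0)).add
        (((hasDerivAt_pow 2 s).const_mul (f3 0)).div_const 2)
      exact h.congr_deriv (by push_cast; ring)
    exact (h2 s).sub hp
  have hH3 : ∀ s, HasDerivAt (fun s => f2 s - (f2 0 + f3 0 * s))
      (f3 s - f3 0) s := by
    intro s
    have h := (((hasDerivAt_id s).const_mul (f3 0)).const_add (f2 0))
    exact (h3 s).sub (by simpa using h)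
  have T0 : ∀ {g : ℝ → ℝ}, ContinuousAt g 0 → g 0 = 0 → Tendsto g (𝓝[>] (0:ℝ)) (𝓝 0) := by
    intro g hg hg0
    have := hg.tendsto.mono_left (nhdsWithin_le_nhds (s := Ioi (0:ℝ)))
    rwa [hg0] at this
  have tH : Tendsto (fun s => f s - (f1 0 * s + f2 0 * s^2/2 + f3 0 * s^3/6)) (𝓝[>] (0:ℝ)) (𝓝 0) :=
    T0 (hH1 0).continuousAt (by simp [hf0])
  have tH1 : Tendsto (fun s => f1 s - (f1 0 + f2 0 * s + f3 0 * s^2/2)) (𝓝[>] (0:ℝ)) (𝓝 0) :=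
    T0 (hH2 0).continuousAt (by simp)
  have tH2 : Tendsto (fun s => f2 s - (f2 0 + f3 0 * s)) (𝓝[>] (0:ℝ)) (𝓝 0) :=
    T0 (hH3 0).continuousAt (by simp)
  have tH3 : Tendsto (fun s => (f3 s - f3 0) / 6) (𝓝[>] (0:ℝ)) (𝓝 0) := by
    have : Tendsto (fun s => f3 s - f3 0) (𝓝[>] (0:ℝ)) (𝓝 0) :=
      T0 (hcont.sub continuousAt_const) (by simp)
    simpa using this.div_const 6
  have hev : ∀ᶠ s in 𝓝[>] (0:ℝ), 0 < s := self_mem_nhdsWithin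
  have L2 : Tendsto (fun s => (f2 s - (f2 0 + f3 0 * s)) / (6 * s)) (𝓝[>] (0:ℝ)) (𝓝 0) := by
    apply HasDerivAt.lhopital_zero_nhdsGT (f' := fun s => f3 s - f3 0) (g' := fun _ => (6:ℝ))
      (Eventually.of_forall hH3)
      (Eventually.of_forall fun s => by simpa using (hasDerivAt_id s).const_mul (6:ℝ))
      (Eventually.of_forall fun s => by norm_num)
      tH2
      (by
        have : Tendsto (fun s : ℝ => 6 * s) (𝓝 (0:ℝ)) (𝓝 (6 * 0)) := (tendsto_id.const_mul 6)
        simpa using this.mono_left (nhdsWithin_le_nhds (s := Ioi (0:ℝ))))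
      tH3
  have L1 : Tendsto (fun s => (f1 s - (f1 0 + f2 0 * s + f3 0 * s^2/2)) / (3 * s^2))
      (𝓝[>] (0:ℝ)) (𝓝 0) := by
    apply HasDerivAt.lhopital_zero_nhdsGT (f' := fun s => f2 s - (f2 0 + f3 0 * s))
        (g' := fun s => 6 * s)
      (Eventually.of_forall hH2)
      (Eventually.of_forall fun s => by
        have h := (hasDerivAt_pow 2 s).const_mul (3:ℝ)
        norm_num at h; exact h.congr_deriv (by ring))
      (hev.mono fun s hs => by positivity)
      tH1
      (by
        have : Tendsto (fun s : ℝ => 3 * s^2) (𝓝 (0:ℝ)) (𝓝 (3 * 0^2)) :=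
          (continuous_const.mul (continuous_pow 2)).tendsto 0
        simpa using this.mono_left (nhdsWithin_le_nhds (s := Ioi (0:ℝ))))
      L2
  have L0 : Tendsto (fun s => (f s - (f1 0 * s + f2 0 * s^2/2 + f3 0 * s^3/6)) / s^3)
      (𝓝[>] (0:ℝ)) (𝓝 0) := by
    apply HasDerivAt.lhopital_zero_nhdsGT
        (f' := fun s => f1 s - (f1 0 + f2 0 * s + f3 0 * s^2/2)) (g' := fun s => 3 * s^2)
      (Eventually.of_forall hH1)
      (Eventually.of_forall fun s => by
        have h := hasDerivAt_pow 3 s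
        norm_num at h; exact h)
      (hev.mono fun s hs => by positivity)
      tH
      (by
        have : Tendsto (fun s : ℝ => s^3) (𝓝 (0:ℝ)) (𝓝 ((0:ℝ)^3)) := (continuous_pow 3).tendsto 0
        simpa using this.mono_left (nhdsWithin_le_nhds (s := Ioi (0:ℝ))))
      L1
  rw [isLittleO_iff_tendsto' (hev.mono fun s hs h => absurd h (by positivity))]
  exact L0

end Aux

theorem bsPut_small_time_expansion (z σ : ℝ) (hσ : 0 < σ) :
    (fun θ : ℝ => bsPut z θ σ -
        (σ * F₁ (z / σ) + σ^2 * Real.sqrt θ / 2 * F₂ (z / σ)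
          + σ^3 * θ / 6 * F₃ (z / σ)))
      =o[𝓝[>] 0] (fun θ : ℝ => θ) := by
  have hσ' : σ ≠ 0 := hσ.ne'
  -- values at 0
  have hf0 : stdNormalCdf (z/σ + σ*(0:ℝ)/2) * Real.exp ((0:ℝ)*z) - stdNormalCdf (z/σ - σ*(0:ℝ)/2) = 0 := by
    norm_num
  have hc1 : σ * stdNormalPdf (z/σ - σ*(0:ℝ)/2)
      + z * (stdNormalCdf (z/σ + σ*(0:ℝ)/2) * Real.exp ((0:ℝ)*z)) = σ * F₁ (z/σ) := by
    simp only [F₁]; norm_num; field_simp; ring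
  have hc2 : (σ^2/2 * (z/σ - σ*(0:ℝ)/2) + z*σ/2) * stdNormalPdf (z/σ - σ*(0:ℝ)/2)
      + z^2 * (stdNormalCdf (z/σ + σ*(0:ℝ)/2) * Real.exp ((0:ℝ)*z)) = σ^2 * F₂ (z/σ) := by
    simp only [F₂]; norm_num; field_simp; ring
  have hc3 : (-(σ^3/4) * (1 - (z/σ - σ*(0:ℝ)/2)^2) + z*σ^2/4 * (z/σ - σ*(0:ℝ)/2) + z^2*σ/2)
        * stdNormalPdf (z/σ - σ*(0:ℝ)/2)
      + z^3 * (stdNormalCdf (z/σ + σ*(0:ℝ)/2) * Real.exp ((0:ℝ)*z)) = σ^3 * F₃ (z/σ) := by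
    simp only [F₃]; norm_num; field_simp; ring
  have hcont : ContinuousAt (fun s : ℝ =>
      (-(σ^3/4) * (1 - (z/σ - σ*s/2)^2) + z*σ^2/4 * (z/σ - σ*s/2) + z^2*σ/2)
        * stdNormalPdf (z/σ - σ*s/2)
      + z^3 * (stdNormalCdf (z/σ + σ*s/2) * Real.exp (s*z))) 0 := by
    have cb : Continuous (fun s : ℝ => z/σ - σ*s/2) := by fun_prop
    have ca : Continuous (fun s : ℝ => z/σ + σ*s/2) := by fun_prop
    exact (((by fun_prop : Continuous (fun s : ℝ =>
        -(σ^3/4) * (1 - (z/σ - σ*s/2)^2) + z*σ^2/4 * (z/σ - σ*s/2) + z^2*σ/2)).mul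
        (pdf_cont.comp cb)).add (continuous_const.mul ((cdf_cont.comp ca).mul
        (by fun_prop : Continuous (fun s : ℝ => Real.exp (s*z)))))).continuousAt
  have hP := peano3 (hG z σ hσ') (hG1 z σ hσ') (hG2 z σ hσ') hcont hf0 hc1 hc2 hc3
  -- substitute s = √θ
  have hsq : Tendsto Real.sqrt (𝓝[>] (0:ℝ)) (𝓝[>] (0:ℝ)) := by
    rw [tendsto_nhdsWithin_iff]
    constructor
    · simpa using (Real.continuous_sqrt.tendsto 0).mono_left
        (nhdsWithin_le_nhds (s := Ioi (0:ℝ)))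
    · filter_upwards [self_mem_nhdsWithin] with θ hθ
      exact Real.sqrt_pos.mpr hθ
  have hP2 := hP.comp_tendsto hsq
  have hP3 := hP2.mul_isBigO (isBigO_refl (fun θ : ℝ => (Real.sqrt θ)⁻¹) (𝓝[>] (0:ℝ)))
  refine hP3.congr' ?_ ?_
  · filter_upwards [self_mem_nhdsWithin] with θ hθ
    have hst : 0 < Real.sqrt θ := Real.sqrt_pos.mpr hθ
    simp only [Function.comp_apply, bsPut]
    set st := Real.sqrt θ with hstdef
    have h2 : st * st = θ := Real.mul_self_sqrt hθ.le
    rw [← h2]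
    field_simp
  · filter_upwards [self_mem_nhdsWithin] with θ hθ
    have hst : 0 < Real.sqrt θ := Real.sqrt_pos.mpr hθ
    have h2 : Real.sqrt θ * Real.sqrt θ = θ := Real.mul_self_sqrt hθ.le
    simp only [Function.comp_apply]
    rw [show Real.sqrt θ ^ 3 = Real.sqrt θ * Real.sqrt θ * Real.sqrt θ by ring, h2]
    field_simp
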